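/- The matrix W_m, defined as the sum of the lower triangular matrix L_m with entries (L_m)_{ij} = C(i, i-j) p^{i-j} q^{j+1} and the upper triangular matrix U_m with entries (U_m)_{ij} = C(m-i, j-i) p^{m+1-j} q^{j-i} (for 0 ≤ i,j ≤ m, with binomial coefficients equal to 0 when the lower index exceeds the upper index), is column-stochastic: every column of W_m sums to 1. -/

import Mathlib

open Finset Matrix

lemma aux_pascal (p q : ℝ) (h : p + q = 1) (t s : ℕ) :
    p * ∑ k ∈ Finset.range (s+1), (((t+1+k).choose k : ℕ) : ℝ) * q^k
      + q^(s+1) * (((s+t+1).choose s : ℕ) : ℝ)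
    = ∑ k ∈ Finset.range (s+1), (((t+k).choose k : ℕ) : ℝ) * q^k := by
  induction s with
  | zero => simp; linarith
  | succ s ih =>
      rw [Finset.sum_range_succ, Finset.sum_range_succ (f := fun k => (((t+k).choose k : ℕ) : ℝ) * q^k)]
      have e1 : t+1+(s+1) = s+t+1+1 := by omega
      have e2 : s+1+t+1 = s+t+1+1 := by omega
      have e3 : t+(s+1) = s+t+1 := by omega
      rw [e1, e2, e3]
      have hpR : (((s+t+1+1).choose (s+1) : ℕ) : ℝ)
          = ((s+t+1).choose s : ℕ) + (((s+t+1).choose (s+1) : ℕ) : ℝ) := by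
        exact_mod_cast congrArg (Nat.cast (R := ℝ)) (Nat.choose_succ_succ (s+t+1) s)
      linear_combination ih + q^(s+1) * (((s+t+1+1).choose (s+1) : ℕ) : ℝ) * h + q^(s+1) * hpR

lemma geo_id (p q : ℝ) (h : p + q = 1) (s : ℕ) :
    q^(s+1) + p * ∑ k ∈ Finset.range (s+1), q^k = 1 := by
  induction s with
  | zero => simp; linarith
  | succ s ih =>
      rw [Finset.sum_range_succ]
      linear_combination ih + q^(s+1) * h

lemma key_id (p q : ℝ) (h : p + q = 1) (s t : ℕ) :
    q^(s+1) * ∑ k ∈ Finset.range (t+1), (((s+k).choose k : ℕ) : ℝ) * p^k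
      + p^(t+1) * ∑ k ∈ Finset.range (s+1), (((t+k).choose k : ℕ) : ℝ) * q^k = 1 := by
  induction t with
  | zero =>
      simp only [Nat.zero_add, Nat.choose_self, Nat.choose_zero_right, Nat.zero_eq,
        Finset.range_one, Finset.sum_singleton, Nat.add_zero, Nat.cast_one, one_mul, pow_zero,
        pow_one, mul_one]
      exact geo_id p q h s
  | succ t ih =>
      have ha := aux_pascal p q h t s
      rw [Finset.sum_range_succ]
      have e1 : s + (t+1) = s+t+1 := by omega
      rw [e1]
      have hcs : (((s+t+1).choose (t+1) : ℕ) : ℝ) = (((s+t+1).choose s : ℕ) : ℝ) := by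
        have h5 : t+1 = (s+t+1) - s := by omega
        rw [h5, Nat.choose_symm (by omega)]
      linear_combination ih + p^(t+1) * ha + q^(s+1) * p^(t+1) * hcs

/-- `W_m = L_m + U_m` is column-stochastic: every column sums to 1. -/
theorem Wm_column_stochastic (p : ℝ) (hp : p ∈ Set.Ioo (0:ℝ) 1) (q : ℝ) (hq : q = 1 - p)
    (m : ℕ) (hm : 1 ≤ m)
    (L U W : Matrix (Fin (m + 1)) (Fin (m + 1)) ℝ)
    (hL : ∀ i j : Fin (m + 1),
      L i j = if (j : ℕ) ≤ (i : ℕ) then ((i : ℕ).choose ((i : ℕ) - (j : ℕ)) : ℝ)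
        * p ^ ((i : ℕ) - (j : ℕ)) * q ^ ((j : ℕ) + 1) else 0)
    (hU : ∀ i j : Fin (m + 1),
      U i j = if (i : ℕ) ≤ (j : ℕ) then ((m - (i : ℕ)).choose ((j : ℕ) - (i : ℕ)) : ℝ)
        * p ^ (m + 1 - (j : ℕ)) * q ^ ((j : ℕ) - (i : ℕ)) else 0)
    (hW : W = L + U) :
    ∀ j : Fin (m + 1), ∑ i : Fin (m + 1), W i j = 1 := by
  intro j
  set s := (j : ℕ) with hs
  have hsm : s ≤ m := by omega
  have hpq : p + q = 1 := by linarith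
  have hsplit : ∑ i : Fin (m+1), W i j = (∑ i : Fin (m+1), L i j) + ∑ i : Fin (m+1), U i j := by
    simp [hW, Finset.sum_add_distrib]
  -- L part
  have hLsum : ∑ i : Fin (m+1), L i j
      = q^(s+1) * ∑ k ∈ Finset.range (m - s + 1), (((s+k).choose k : ℕ) : ℝ) * p^k := by
    have h1 : ∑ i : Fin (m+1), L i j
        = ∑ i ∈ Finset.range (m+1),
            (if s ≤ i then ((i.choose (i - s) : ℕ) : ℝ) * p^(i-s) * q^(s+1) else 0) := by
      rw [← Fin.sum_univ_eq_sum_range]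
      exact Finset.sum_congr rfl fun i _ => by rw [hL]
    rw [h1, Finset.range_eq_Ico, ← Finset.sum_Ico_consecutive _ (Nat.zero_le s) (by omega : s ≤ m+1)]
    have hz : ∑ i ∈ Finset.Ico 0 s,
        (if s ≤ i then ((i.choose (i - s) : ℕ) : ℝ) * p^(i-s) * q^(s+1) else 0) = 0 := by
      apply Finset.sum_eq_zero
      intro i hi
      simp only [Finset.mem_Ico] at hi
      rw [if_neg (by omega)]
    rw [hz, zero_add, Finset.sum_Ico_eq_sum_range]
    have hlen : m + 1 - s = m - s + 1 := by omega
    rw [hlen, Finset.mul_sum]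
    apply Finset.sum_congr rfl
    intro k _
    rw [if_pos (by omega)]
    have : s + k - s = k := by omega
    rw [this]
    ring
  -- U part
  have hUsum : ∑ i : Fin (m+1), U i j
      = p^(m-s+1) * ∑ k ∈ Finset.range (s+1), (((m-s+k).choose k : ℕ) : ℝ) * q^k := by
    have h1 : ∑ i : Fin (m+1), U i j
        = ∑ i ∈ Finset.range (m+1),
            (if i ≤ s then (((m-i).choose (s - i) : ℕ) : ℝ) * p^(m+1-s) * q^(s-i) else 0) := by
      rw [← Fin.sum_univ_eq_sum_range]
      exact Finset.sum_congr rfl fun i _ => by rw [hU]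
    rw [h1, ← Finset.sum_subset (Finset.range_subset_range.mpr (by omega : s+1 ≤ m+1))]
    · rw [← Finset.sum_range_reflect]
      have hlen : m + 1 - s = m - s + 1 := by omega
      rw [Finset.mul_sum]
      apply Finset.sum_congr rfl
      intro k hk
      simp only [Finset.mem_range] at hk
      have e0 : s + 1 - 1 - k = s - k := by omega
      rw [e0, if_pos (by omega : s - k ≤ s)]
      have e1 : m - (s-k) = m - s + k := by omega
      have e2 : s - (s-k) = k := by omega
      rw [e1, e2, hlen]
      ring
    · intro i hi hni
      simp only [Finset.mem_range] at hi hni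
      rw [if_neg (by omega)]
  rw [hsplit, hLsum, hUsum]
  exact key_id p q hpq s (m - s)
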